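/- Let h₀ ∈ [0, 1) and suppose ρ₀ > 0 satisfies ρ₀ < (1 − h₀)²/(2(1 + h₀)). Let B : [0,∞) → ℝ and v : [0,∞) → ℝ be continuous with |B(t) − 1| ≤ h₀ for all t. If w is C² with w(0) = 1, w'(0) = 0, and w''(t) + B(t)²w(t) = B(t)ρ₀ − v(t)²ρ₀ while w(t) ≥ 0, then there exists T ≤ π/(1 − h₀) with w(T) ≤ 0. -/

import Mathlib

theorem stmt17 (h₀ ρ₀ : ℝ) (hh0 : 0 ≤ h₀) (hh1 : h₀ < 1) (hρ : 0 < ρ₀)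
    (hsmall : ρ₀ < (1 - h₀) ^ 2 / (2 * (1 + h₀)))
    (B v w : ℝ → ℝ) (hB : Continuous B) (hv : Continuous v)
    (hBb : ∀ t ≥ (0:ℝ), |B t - 1| ≤ h₀)
    (hw : ContDiff ℝ 2 w) (hw0 : w 0 = 1) (hw'0 : deriv w 0 = 0)
    (hode : ∀ t ≥ (0:ℝ), 0 ≤ w t →
      deriv (deriv w) t + (B t) ^ 2 * w t = B t * ρ₀ - (v t) ^ 2 * ρ₀) :
    ∃ T ∈ Set.Icc (0:ℝ) (Real.pi / (1 - h₀)), w T ≤ 0 := by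
  by_contra hcon
  push_neg at hcon
  set c : ℝ := 1 - h₀ with hc
  have hcpos : 0 < c := by rw [hc]; linarith
  have hπ : 0 < Real.pi := Real.pi_pos
  set L : ℝ := Real.pi / c with hL
  have hLpos : 0 < L := div_pos hπ hcpos
  set K : ℝ := (1 + h₀) * ρ₀ / c ^ 2 with hK
  have hKeq : c ^ 2 * K = (1 + h₀) * ρ₀ := by
    rw [hK]; field_simp
  have hKlt : K < 1 / 2 := by
    rw [hK, div_lt_iff₀ (by positivity)]
    rw [lt_div_iff₀ (by positivity)] at hsmall
    nlinarith
  have hw1 : Differentiable ℝ w := hw.differentiable (by norm_num)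
  have hw2 : Differentiable ℝ (deriv w) := by
    have h2 : ContDiff ℝ (1 + 1) w := by norm_num at hw ⊢; exact hw
    exact ((contDiff_succ_iff_deriv.mp h2).2.2).differentiable (by norm_num)
  set g : ℝ → ℝ := fun t => deriv w t * Real.sin (c * t) - c * (w t - K) * Real.cos (c * t)
    with hg
  have hgd : ∀ t : ℝ, HasDerivAt g
      ((deriv (deriv w) t + c ^ 2 * (w t - K)) * Real.sin (c * t)) t := by
    intro t
    have h1 : HasDerivAt w (deriv w t) t := (hw1 t).hasDerivAt
    have h2 : HasDerivAt (deriv w) (deriv (deriv w) t) t := (hw2 t).hasDerivAt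
    have hid : HasDerivAt (fun x : ℝ => c * x) c t := by
      simpa using (hasDerivAt_id t).const_mul c
    have hs : HasDerivAt (fun x : ℝ => Real.sin (c * x)) (Real.cos (c * t) * c) t :=
      (Real.hasDerivAt_sin (c * t)).comp t hid
    have hco : HasDerivAt (fun x : ℝ => Real.cos (c * x)) (-Real.sin (c * t) * c) t :=
      (Real.hasDerivAt_cos (c * t)).comp t hid
    have := (h2.mul hs).sub (((h1.sub_const K).const_mul c).mul hco)
    exact this.congr_deriv (by ring)
  have hgdiff : Differentiable ℝ g := fun t => (hgd t).differentiableAt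
  have hganti : AntitoneOn g (Set.Icc 0 L) := by
    apply antitoneOn_of_deriv_nonpos (convex_Icc 0 L) hgdiff.continuous.continuousOn
      hgdiff.differentiableOn
    intro x hx
    rw [interior_Icc] at hx
    rw [(hgd x).deriv]
    have hx0 : 0 ≤ x := hx.1.le
    have hwx : 0 < w x := hcon x ⟨hx0, hx.2.le⟩
    have hBx := hBb x hx0
    rw [abs_le] at hBx
    have hBge : c ≤ B x := by linarith [hBx.1]
    have hBle : B x ≤ 1 + h₀ := by linarith [hBx.2]
    have hB2 : c ^ 2 ≤ B x ^ 2 := by nlinarith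
    have hodex := hode x hx0 hwx.le
    have hsin : 0 ≤ Real.sin (c * x) := by
      apply Real.sin_nonneg_of_nonneg_of_le_pi (by positivity)
      have : c * x ≤ c * L := by nlinarith [hx.2]
      calc c * x ≤ c * L := this
        _ = Real.pi := by rw [hL]; field_simp
    apply mul_nonpos_of_nonpos_of_nonneg _ hsin
    nlinarith [sq_nonneg (v x), hwx.le, hB2, hKeq]
  have hkey : g L ≤ g 0 :=
    hganti (Set.left_mem_Icc.mpr hLpos.le) (Set.right_mem_Icc.mpr hLpos.le) hLpos.le
  have hcL : c * L = Real.pi := by rw [hL]; field_simp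
  have hg0 : g 0 = -(c * (1 - K)) := by
    simp [hg, hw0, hw'0]
  have hgL : g L = c * (w L - K) := by
    simp [hg, hcL, Real.sin_pi, Real.cos_pi]
  have hwL : 0 < w L := hcon L ⟨hLpos.le, le_rfl⟩
  rw [hg0, hgL] at hkey
  nlinarith
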